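/- Let m be even and let a be a cup diagram on m vertices consisting only of cups, with an even number of unmarked cups. Then for every U ∈ 𝒰_a, the complement M∖U (M = {1,…,m}) also lies in 𝒰_a and (−1)^{Λ_a(U)} = (−1)^{Λ_a(M∖U)}; consequently L_a = ∑_{U∈𝒰'_a} (−1)^{Λ_a(U)} (l_U + l_{M∖U}) where 𝒰'_a contains one representative from each pair {U, M∖U}. -/
import Mathlib


open scoped Classical

namespace CupDiagrams

variable {m : ℕ}

/-- Vertex `i` carries a ray: it is not an endpoint of any cup. -/
def IsRay (cup : Finset (Fin m × Fin m)) (i : Fin m) : Prop :=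
  ∀ p ∈ cup, p.1 ≠ i ∧ p.2 ≠ i

/-- `(cup, cupMarked, rayMarked)` is a marked cup diagram on `m` vertices in `C_KL(m)`. -/
def IsKL (cup cupMarked : Finset (Fin m × Fin m)) (rayMarked : Finset (Fin m)) : Prop :=
  (∀ p ∈ cup, p.1 < p.2) ∧
  (∀ p ∈ cup, ∀ q ∈ cup, p ≠ q →
      p.1 ≠ q.1 ∧ p.1 ≠ q.2 ∧ p.2 ≠ q.1 ∧ p.2 ≠ q.2) ∧
  (∀ p ∈ cup, ∀ q ∈ cup, ¬(p.1 < q.1 ∧ q.1 < p.2 ∧ p.2 < q.2)) ∧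
  (∀ p ∈ cup, ∀ i : Fin m, IsRay cup i → ¬(p.1 < i ∧ i < p.2)) ∧
  cupMarked ⊆ cup ∧
  (∀ p ∈ cupMarked, (∀ q ∈ cup, ¬(q.1 < p.1 ∧ p.2 < q.2)) ∧
      (∀ i : Fin m, IsRay cup i → ¬(i < p.1))) ∧
  (∀ i ∈ rayMarked, IsRay cup i ∧ ∀ j : Fin m, IsRay cup j → ¬(j < i)) ∧
  Even (rayMarked.card + (cup \ cupMarked).card)

/-- `𝒰_a`: the subsets `U ⊆ {1,…,m}` containing exactly one endpoint of each cup of the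
diagram and no ray vertices. -/
noncomputable def CalU (cup : Finset (Fin m × Fin m)) : Finset (Finset (Fin m)) :=
  Finset.univ.filter fun U =>
    (∀ p ∈ cup, (p.1 ∈ U ↔ p.2 ∉ U)) ∧ ∀ i ∈ U, ∃ p ∈ cup, i = p.1 ∨ i = p.2

/-- `Λ_a(U)`: the number of right endpoints of unmarked cups in `U` plus the number of
endpoints of marked cups in `U`. -/
noncomputable def Lam (cup cupMarked : Finset (Fin m × Fin m)) (U : Finset (Fin m)) : ℕ :=
  ((cup \ cupMarked).filter fun p => p.2 ∈ U).card +
    ((cupMarked.filter fun p => p.1 ∈ U).card + (cupMarked.filter fun p => p.2 ∈ U).card)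

/-- `L_a = ∑_{U ∈ 𝒰_a} (−1)^{Λ_a(U)} l_U`. -/
noncomputable def La (cup cupMarked : Finset (Fin m × Fin m)) : Finset (Fin m) →₀ ℂ :=
  ∑ U ∈ CalU cup, ((-1 : ℂ) ^ Lam cup cupMarked U) • Finsupp.single U (1 : ℂ)

end CupDiagrams

open CupDiagrams

/-- Let `m` be even and let `a` be a cup diagram on `m` vertices consisting only of cups,
with an even number of unmarked cups.  Then `𝒰_a` is stable under complementation,
`(−1)^{Λ_a(U)} = (−1)^{Λ_a(M∖U)}`, and consequently
`L_a = ∑_{U ∈ 𝒰'_a} (−1)^{Λ_a(U)} (l_U + l_{M∖U})` for any set `𝒰'_a` of representatives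
of the pairs `{U, M∖U}`. -/
theorem stmt16 (m : ℕ) (hm : Even m)
    (cup cupMarked : Finset (Fin m × Fin m))
    (hKL : IsKL cup cupMarked (∅ : Finset (Fin m)))
    (hall : ∀ v : Fin m, ∃ p ∈ cup, v = p.1 ∨ v = p.2)
    (heven : Even (cup \ cupMarked).card) :
    (∀ U ∈ CalU cup, Uᶜ ∈ CalU cup ∧
      ((-1 : ℂ) ^ Lam cup cupMarked U = (-1 : ℂ) ^ Lam cup cupMarked Uᶜ)) ∧
    (∀ U' : Finset (Finset (Fin m)), U' ⊆ CalU cup →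
      (∀ U ∈ CalU cup, (U ∈ U' ↔ Uᶜ ∉ U')) →
      La cup cupMarked =
        ∑ U ∈ U', ((-1 : ℂ) ^ Lam cup cupMarked U) •
          (Finsupp.single U (1 : ℂ) + Finsupp.single Uᶜ (1 : ℂ))) := by
  obtain ⟨h1, h2, h3, h4, hsub, h6, h7, h8⟩ := hKL
  have hmem : ∀ U : Finset (Fin m), U ∈ CalU cup ↔
      (∀ p ∈ cup, (p.1 ∈ U ↔ p.2 ∉ U)) := by
    intro U
    simp only [CalU, Finset.mem_filter, Finset.mem_univ, true_and]
    exact ⟨fun h => h.1, fun h => ⟨h, fun i _ => hall i⟩⟩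
  have hcompl : ∀ U ∈ CalU cup, Uᶜ ∈ CalU cup := by
    intro U hU
    rw [hmem] at hU ⊢
    intro p hp
    have := hU p hp
    simp only [Finset.mem_compl]
    tauto
  have hsign : ∀ U ∈ CalU cup,
      (-1 : ℂ) ^ Lam cup cupMarked U = (-1 : ℂ) ^ Lam cup cupMarked Uᶜ := by
    intro U hU
    rw [hmem] at hU
    have hA : ((cup \ cupMarked).filter fun p => p.2 ∈ U).card
        + ((cup \ cupMarked).filter fun p => p.2 ∈ Uᶜ).card = (cup \ cupMarked).card := by
      have : ((cup \ cupMarked).filter fun p => p.2 ∈ Uᶜ)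
          = ((cup \ cupMarked).filter fun p => ¬ p.2 ∈ U) := by
        apply Finset.filter_congr; intro p _; simp
      rw [this, Finset.card_filter_add_card_filter_not]
    have hB : (cupMarked.filter fun p => p.1 ∈ U).card
        + (cupMarked.filter fun p => p.2 ∈ U).card = cupMarked.card := by
      have : (cupMarked.filter fun p => p.1 ∈ U)
          = (cupMarked.filter fun p => ¬ p.2 ∈ U) := by
        apply Finset.filter_congr; intro p hp
        simpa using hU p (hsub hp)
      rw [this, add_comm, Finset.card_filter_add_card_filter_not]
    have hB' : (cupMarked.filter fun p => p.1 ∈ Uᶜ).card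
        + (cupMarked.filter fun p => p.2 ∈ Uᶜ).card = cupMarked.card := by
      have : (cupMarked.filter fun p => p.1 ∈ Uᶜ)
          = (cupMarked.filter fun p => ¬ p.2 ∈ Uᶜ) := by
        apply Finset.filter_congr; intro p hp
        have := hU p (hsub hp)
        simp only [Finset.mem_compl]
        tauto
      rw [this, add_comm, Finset.card_filter_add_card_filter_not]
    have hsum : Even (Lam cup cupMarked U + Lam cup cupMarked Uᶜ) := by
      have : Lam cup cupMarked U + Lam cup cupMarked Uᶜ
          = (cup \ cupMarked).card + 2 * cupMarked.card := by
        unfold Lam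
        omega
      rw [this]
      exact heven.add (even_two_mul _)
    rcases Nat.even_add.mp hsum with h
    by_cases he : Even (Lam cup cupMarked U)
    · rw [Even.neg_one_pow he, Even.neg_one_pow (h.mp he)]
    · rw [Odd.neg_one_pow (Nat.not_even_iff_odd.mp he),
        Odd.neg_one_pow (Nat.not_even_iff_odd.mp (fun hc => he (h.mpr hc)))]
  refine ⟨fun U hU => ⟨hcompl U hU, hsign U hU⟩, ?_⟩
  intro U' hU' hrep
  have hdisj : Disjoint U' (U'.image compl) := by
    rw [Finset.disjoint_left]
    intro V hV hV'
    obtain ⟨W, hW, rfl⟩ := Finset.mem_image.mp hV'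
    exact (hrep W (hU' hW)).mp hW hV
  have hcover : CalU cup = U' ∪ U'.image compl := by
    apply Finset.Subset.antisymm
    · intro V hV
      by_cases h : V ∈ U'
      · exact Finset.mem_union_left _ h
      · apply Finset.mem_union_right
        refine Finset.mem_image.mpr ⟨Vᶜ, ?_, compl_compl V⟩
        by_contra h'
        exact h ((hrep V hV).mpr h')
    · intro V hV
      rcases Finset.mem_union.mp hV with h | h
      · exact hU' h
      · obtain ⟨W, hW, rfl⟩ := Finset.mem_image.mp h
        exact hcompl W (hU' hW)
  unfold La
  rw [hcover, Finset.sum_union hdisj,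
    Finset.sum_image (fun x _ y _ h => compl_injective h), ← Finset.sum_add_distrib]
  apply Finset.sum_congr rfl
  intro U hU
  rw [smul_add, hsign U (hU' hU)]
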